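/- There are continuum many pairwise distinct conjugacy classes in Aut(R) consisting of automorphisms f with property (*): concretely, for every function p : ℕ∖{0} → {0,1} there exists f_p ∈ Aut(R) such that f_p has no finite orbits, and for every vertex v and every n ≥ 1, v is adjacent to f_p^n(v) if and only if p(n) = 0; moreover, for p ≠ p' the automorphisms f_p and f_{p'} are not conjugate in Aut(R). -/

import Mathlib

/-- The defining extension property of the random (Rado) graph. -/
def ExtensionProperty {V : Type*} (G : SimpleGraph V) : Prop :=
  ∀ A B : Finset V, Disjoint A B →
    ∃ v : V, (∀ a ∈ A, G.Adj a v) ∧ (∀ b ∈ B, ¬ G.Adj b v)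

/-- The orbit `O^f(v) = {f^k v : k ∈ ℤ}` of a vertex under an automorphism. -/
def fOrbit {V : Type*} {G : SimpleGraph V} (f : G ≃g G) (v : V) : Set V :=
  Set.range fun k : ℤ => (f.toEquiv ^ k) v

open Classical in
/-- Strong extension property: can additionally avoid any finite set `C`. -/
theorem ep_strong {V : Type*} {G : SimpleGraph V} (hG : ExtensionProperty G)
    (A B C : Finset V) (hAB : Disjoint A B) :
    ∃ v : V, v ∉ C ∧ (∀ a ∈ A, G.Adj a v) ∧ (∀ b ∈ B, ¬ G.Adj b v) := by
  classical
  set B' : Finset V := B ∪ (C \ A) with hB'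
  have hAB' : Disjoint A B' := by
    rw [hB']
    refine Finset.disjoint_union_right.mpr ⟨hAB, Finset.disjoint_sdiff⟩
  obtain ⟨t, ht, -⟩ := hG (A ∪ B') ∅ (Finset.disjoint_empty_right _)
  have htA : t ∉ A ∪ B' := fun h => (G.irrefl (ht t h))
  have hd : Disjoint A (B' ∪ {t}) := by
    refine Finset.disjoint_union_right.mpr ⟨hAB', Finset.disjoint_singleton_right.mpr ?_⟩
    exact fun h => htA (Finset.mem_union_left _ h)
  obtain ⟨v, hvA, hvB⟩ := hG A (B' ∪ {t}) hd
  refine ⟨v, ?_, hvA, fun b hb => hvB b (Finset.mem_union_left _ (hB' ▸ Finset.mem_union_left _ hb))⟩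
  intro hvC
  by_cases hvA' : v ∈ A
  · exact G.irrefl (hvA v hvA')
  · have hvB' : v ∈ B' := hB' ▸ Finset.mem_union_right _ (Finset.mem_sdiff.mpr ⟨hvC, hvA'⟩)
    have h1 : G.Adj v t := ht v (Finset.mem_union_right _ hvB')
    have h2 : ¬ G.Adj t v := hvB t (Finset.mem_union_right _ (Finset.mem_singleton_self t))
    exact h2 h1.symm

section BackForth

variable {W : Type*} {V : Type*}

/-- A finite partial isomorphism between graphs, as a finite set of pairs. -/
structure PartIso (H : SimpleGraph W) (G : SimpleGraph V) where
  s : Finset (W × V)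
  func : ∀ ⦃a b : W × V⦄, a ∈ s → b ∈ s → a.1 = b.1 → a.2 = b.2
  coinj : ∀ ⦃a b : W × V⦄, a ∈ s → b ∈ s → a.2 = b.2 → a.1 = b.1
  adj : ∀ ⦃a b : W × V⦄, a ∈ s → b ∈ s → (H.Adj a.1 b.1 ↔ G.Adj a.2 b.2)

variable {H : SimpleGraph W} {G : SimpleGraph V}

/-- Swap a partial isomorphism. -/
def PartIso.swap (P : PartIso H G) : PartIso G H where
  s := P.s.map (Equiv.prodComm W V).toEmbedding
  func := by
    intro a b ha hb h
    simp only [Finset.mem_map_equiv] at ha hb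
    simpa using P.coinj ha hb (by simpa using h)
  coinj := by
    intro a b ha hb h
    simp only [Finset.mem_map_equiv] at ha hb
    simpa using P.func ha hb (by simpa using h)
  adj := by
    intro a b ha hb
    simp only [Finset.mem_map_equiv] at ha hb
    exact (P.adj ha hb).symm

@[simp] lemma PartIso.mem_swap (P : PartIso H G) (a : V × W) :
    a ∈ P.swap.s ↔ (a.2, a.1) ∈ P.s := by
  simp only [PartIso.swap, Finset.mem_map_equiv, Equiv.prodComm_symm, Equiv.prodComm_apply, Prod.swap]

/-- Extend a partial isomorphism to include a given left vertex in its domain. -/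
theorem PartIso.extend_left (hG : ExtensionProperty G) (P : PartIso H G) (w : W) :
    ∃ Q : PartIso H G, P.s ⊆ Q.s ∧ ∃ v, (w, v) ∈ Q.s := by
  classical
  by_cases hw : ∃ v, (w, v) ∈ P.s
  · exact ⟨P, le_refl _, hw⟩
  have hwd : ∀ a : W × V, a ∈ P.s → a.1 ≠ w := by
    rintro ⟨w', v'⟩ ha rfl
    exact hw ⟨v', ha⟩
  set A : Finset V := (P.s.filter (fun a => H.Adj w a.1)).image Prod.snd with hA
  set B : Finset V := (P.s.filter (fun a => ¬ H.Adj w a.1)).image Prod.snd with hB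
  set C : Finset V := P.s.image Prod.snd with hC
  have hAB : Disjoint A B := by
    rw [Finset.disjoint_left]
    intro v hvA hvB
    simp only [hA, hB, Finset.mem_image, Finset.mem_filter] at hvA hvB
    obtain ⟨a, ⟨haP, haAdj⟩, hav⟩ := hvA
    obtain ⟨b, ⟨hbP, hbAdj⟩, hbv⟩ := hvB
    have : a.1 = b.1 := P.coinj haP hbP (hav.trans hbv.symm)
    exact hbAdj (this ▸ haAdj)
  obtain ⟨v, hvC, hvA, hvB⟩ := ep_strong hG A B C hAB
  have hkey : ∀ b : W × V, b ∈ P.s → (H.Adj w b.1 ↔ G.Adj v b.2) := by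
    intro b hb
    constructor
    · intro h
      have : b.2 ∈ A := by
        rw [hA]; exact Finset.mem_image.mpr ⟨b, Finset.mem_filter.mpr ⟨hb, h⟩, rfl⟩
      exact (hvA _ this).symm
    · intro h
      by_contra hadj
      have : b.2 ∈ B := by
        rw [hB]; exact Finset.mem_image.mpr ⟨b, Finset.mem_filter.mpr ⟨hb, hadj⟩, rfl⟩
      exact hvB _ this h.symm
  have hvs : ∀ b : W × V, b ∈ P.s → b.2 ≠ v := by
    rintro ⟨w', v'⟩ hb rfl
    exact hvC (Finset.mem_image.mpr ⟨_, hb, rfl⟩)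
  refine ⟨⟨insert (w, v) P.s, ?_, ?_, ?_⟩, fun a ha => Finset.mem_insert_of_mem ha,
    v, Finset.mem_insert_self _ _⟩
  · intro a b ha hb h
    rcases Finset.mem_insert.mp ha with rfl | ha <;> rcases Finset.mem_insert.mp hb with rfl | hb
    · rfl
    · exact absurd h.symm (hwd b hb)
    · exact absurd h (hwd a ha)
    · exact P.func ha hb h
  · intro a b ha hb h
    rcases Finset.mem_insert.mp ha with rfl | ha <;> rcases Finset.mem_insert.mp hb with rfl | hb
    · rfl
    · exact absurd h.symm (hvs b hb)
    · exact absurd h (hvs a ha)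
    · exact P.coinj ha hb h
  · intro a b ha hb
    rcases Finset.mem_insert.mp ha with rfl | ha <;> rcases Finset.mem_insert.mp hb with rfl | hb
    · simp
    · exact hkey b hb
    · constructor
      · intro h; exact ((hkey a ha).mp h.symm).symm
      · intro h; exact ((hkey a ha).mpr h.symm).symm
    · exact P.adj ha hb

/-- Extend a partial isomorphism to include a given right vertex in its range. -/
theorem PartIso.extend_right (hH : ExtensionProperty H) (P : PartIso H G) (v : V) :
    ∃ Q : PartIso H G, P.s ⊆ Q.s ∧ ∃ w, (w, v) ∈ Q.s := by
  obtain ⟨Q, hQ, w, hw⟩ := PartIso.extend_left hH P.swap v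
  refine ⟨Q.swap, ?_, w, by simpa using hw⟩
  intro a ha
  have : (a.2, a.1) ∈ Q.s := hQ (by simpa using ha)
  simpa using this

end BackForth

section Chain

variable {W : Type*} {V : Type*} {H : SimpleGraph W} {G : SimpleGraph V}

/-- One step of the back-and-forth construction. -/
noncomputable def PartIso.step (hH : ExtensionProperty H) (hG : ExtensionProperty G)
    (P : PartIso H G) (w : W) (v : V) : PartIso H G :=
  Classical.choose (PartIso.extend_right hH
    (Classical.choose (PartIso.extend_left hG P w)) v)

theorem PartIso.step_spec (hH : ExtensionProperty H) (hG : ExtensionProperty G)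
    (P : PartIso H G) (w : W) (v : V) :
    P.s ⊆ (P.step hH hG w v).s ∧ (∃ v', (w, v') ∈ (P.step hH hG w v).s) ∧
      (∃ w', (w', v) ∈ (P.step hH hG w v).s) := by
  obtain ⟨hs, w', hw'⟩ := Classical.choose_spec (PartIso.extend_right hH
    (Classical.choose (PartIso.extend_left hG P w)) v)
  obtain ⟨hs', v', hv'⟩ := Classical.choose_spec (PartIso.extend_left hG P w)
  exact ⟨hs'.trans hs, ⟨v', hs hv'⟩, ⟨w', hw'⟩⟩

/-- The empty partial isomorphism. -/
def PartIso.empty (H : SimpleGraph W) (G : SimpleGraph V) : PartIso H G :=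
  ⟨∅, by simp, by simp, by simp⟩

variable (hH : ExtensionProperty H) (hG : ExtensionProperty G) (iW : W ≃ ℕ) (iV : V ≃ ℕ)

/-- The back-and-forth chain of partial isomorphisms. -/
noncomputable def PartIso.chain : ℕ → PartIso H G
  | 0 => PartIso.empty H G
  | (n + 1) => (PartIso.chain n).step hH hG (iW.symm n) (iV.symm n)

theorem PartIso.chain_mono {m n : ℕ} (h : m ≤ n) :
    (PartIso.chain hH hG iW iV m).s ⊆ (PartIso.chain hH hG iW iV n).s := by
  induction n with
  | zero => simpa [Nat.le_zero.mp h] using Finset.Subset.refl _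
  | succ k ih =>
    rcases Nat.lt_or_ge m (k + 1) with h' | h'
    · exact (ih (Nat.lt_succ_iff.mp h')).trans
        ((PartIso.chain hH hG iW iV k).step_spec hH hG _ _).1
    · have : m = k + 1 := le_antisymm h h'
      subst this; exact Finset.Subset.refl _

theorem PartIso.chain_dom (w : W) :
    ∃ v, (w, v) ∈ (PartIso.chain hH hG iW iV (iW w + 1)).s := by
  have := ((PartIso.chain hH hG iW iV (iW w)).step_spec hH hG
    (iW.symm (iW w)) (iV.symm (iW w))).2.1
  simpa [PartIso.chain] using this

theorem PartIso.chain_ran (v : V) :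
    ∃ w, (w, v) ∈ (PartIso.chain hH hG iW iV (iV v + 1)).s := by
  have := ((PartIso.chain hH hG iW iV (iV v)).step_spec hH hG
    (iW.symm (iV v)) (iV.symm (iV v))).2.2
  simpa [PartIso.chain] using this

theorem PartIso.chain_glue_func {m n : ℕ} {a b : W × V}
    (ha : a ∈ (PartIso.chain hH hG iW iV m).s) (hb : b ∈ (PartIso.chain hH hG iW iV n).s)
    (h : a.1 = b.1) : a.2 = b.2 :=
  (PartIso.chain hH hG iW iV (max m n)).func
    (PartIso.chain_mono hH hG iW iV (le_max_left m n) ha)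
    (PartIso.chain_mono hH hG iW iV (le_max_right m n) hb) h

theorem PartIso.chain_glue_coinj {m n : ℕ} {a b : W × V}
    (ha : a ∈ (PartIso.chain hH hG iW iV m).s) (hb : b ∈ (PartIso.chain hH hG iW iV n).s)
    (h : a.2 = b.2) : a.1 = b.1 :=
  (PartIso.chain hH hG iW iV (max m n)).coinj
    (PartIso.chain_mono hH hG iW iV (le_max_left m n) ha)
    (PartIso.chain_mono hH hG iW iV (le_max_right m n) hb) h

theorem PartIso.chain_glue_adj {m n : ℕ} {a b : W × V}
    (ha : a ∈ (PartIso.chain hH hG iW iV m).s) (hb : b ∈ (PartIso.chain hH hG iW iV n).s) :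
    H.Adj a.1 b.1 ↔ G.Adj a.2 b.2 :=
  (PartIso.chain hH hG iW iV (max m n)).adj
    (PartIso.chain_mono hH hG iW iV (le_max_left m n) ha)
    (PartIso.chain_mono hH hG iW iV (le_max_right m n) hb)

/-- Countable graphs with the extension property are isomorphic. -/
theorem iso_of_extension {W V : Type*} [Countable W] [Infinite W] [Countable V] [Infinite V]
    (H : SimpleGraph W) (G : SimpleGraph V)
    (hH : ExtensionProperty H) (hG : ExtensionProperty G) : Nonempty (H ≃g G) := by
  obtain ⟨dW⟩ := nonempty_denumerable W
  obtain ⟨dV⟩ := nonempty_denumerable V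
  set iW : W ≃ ℕ := Denumerable.eqv W
  set iV : V ≃ ℕ := Denumerable.eqv V
  set toF : W → V := fun w => Classical.choose (PartIso.chain_dom hH hG iW iV w) with htoF
  set invF : V → W := fun v => Classical.choose (PartIso.chain_ran hH hG iW iV v) with hinvF
  have htoFs : ∀ w, (w, toF w) ∈ (PartIso.chain hH hG iW iV (iW w + 1)).s :=
    fun w => Classical.choose_spec (PartIso.chain_dom hH hG iW iV w)
  have hinvFs : ∀ v, (invF v, v) ∈ (PartIso.chain hH hG iW iV (iV v + 1)).s :=
    fun v => Classical.choose_spec (PartIso.chain_ran hH hG iW iV v)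
  refine ⟨⟨⟨toF, invF, ?_, ?_⟩, ?_⟩⟩
  · intro w
    exact PartIso.chain_glue_coinj hH hG iW iV (hinvFs (toF w)) (htoFs w) rfl
  · intro v
    exact PartIso.chain_glue_func hH hG iW iV (htoFs (invF v)) (hinvFs v) rfl
  · intro w w'
    exact (PartIso.chain_glue_adj hH hG iW iV (htoFs w) (htoFs w')).symm

end Chain

section ShiftGraph

/-- An encoding of pairs (finite set, natural) by naturals. -/
noncomputable def encE : Finset (ℤ × ℕ) × ℕ ≃ ℕ :=
  letI := (nonempty_denumerable (Finset (ℤ × ℕ) × ℕ)).some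
  Denumerable.eqv _

/-- The finite set coded by a natural number. -/
noncomputable def enc (m : ℕ) : Finset (ℤ × ℕ) := (encE.symm m).1

theorem enc_surj_above (S : Finset (ℤ × ℕ)) (N : ℕ) : ∃ m, N < m ∧ enc m = S := by
  have hinj : Function.Injective (fun k : ℕ => encE (S, k)) := by
    intro k k' h
    simpa using congrArg Prod.snd (encE.injective h)
  by_contra hcon
  push_neg at hcon
  have hbd : ∀ k : ℕ, encE (S, k) ≤ N := by
    intro k
    by_contra hk
    push_neg at hk
    exact absurd (by simp [enc]) (hcon (encE (S, k)) hk)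
  have : Function.Injective (fun k : ℕ => (⟨encE (S, k), Nat.lt_succ_of_le (hbd k)⟩ : Fin (N + 1))) := by
    intro k k' h
    exact hinj (by simpa using congrArg Fin.val h)
  obtain ⟨k, k', hne, heq⟩ := Finite.exists_ne_map_eq_of_infinite
    (fun k : ℕ => (⟨encE (S, k), Nat.lt_succ_of_le (hbd k)⟩ : Fin (N + 1)))
  exact hne (this heq)

/-- The one-directional adjacency relation of the shift graph. -/
def shiftR (p : ℕ → Bool) (x y : ℤ × ℕ) : Prop :=
  (x.2 = y.2 ∧ x.1 ≠ y.1 ∧ p (x.1 - y.1).natAbs = false) ∨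
    (x.2 < y.2 ∧ (x.1 - y.1, x.2) ∈ enc y.2)

/-- The shift graph: a graph on `ℤ × ℕ` with the extension property on which the
shift `(k, m) ↦ (k+1, m)` is an automorphism realizing the adjacency pattern `p`. -/
def shiftGraph (p : ℕ → Bool) : SimpleGraph (ℤ × ℕ) where
  Adj x y := shiftR p x y ∨ shiftR p y x
  symm := ⟨fun x y h => Or.symm h⟩
  loopless := by
    constructor
    intro x h
    rcases h with h | h <;>
      rcases h with ⟨-, h, -⟩ | ⟨h, -⟩ <;> simp at h

theorem shiftR_shift (p : ℕ → Bool) (x y : ℤ × ℕ) :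
    shiftR p (x.1 + 1, x.2) (y.1 + 1, y.2) ↔ shiftR p x y := by
  have h1 : x.1 + 1 - (y.1 + 1) = x.1 - y.1 := by ring
  have h2 : x.1 + 1 = y.1 + 1 ↔ x.1 = y.1 := by constructor <;> intro h <;> omega
  unfold shiftR
  rw [h1]
  simp only [ne_eq, h2]

/-- The shift automorphism of the shift graph. -/
def shiftAut (p : ℕ → Bool) : shiftGraph p ≃g shiftGraph p where
  toEquiv := Equiv.prodCongr (Equiv.addRight (1 : ℤ)) (Equiv.refl ℕ)
  map_rel_iff' := by
    intro x y
    show shiftR p (x.1 + 1, x.2) (y.1 + 1, y.2) ∨ shiftR p (y.1 + 1, y.2) (x.1 + 1, x.2) ↔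
      shiftR p x y ∨ shiftR p y x
    rw [shiftR_shift, shiftR_shift]

theorem shiftAut_pow (p : ℕ → Bool) (n : ℕ) (x : ℤ × ℕ) :
    ((shiftAut p).toEquiv ^ n) x = (x.1 + n, x.2) := by
  induction n generalizing x with
  | zero => simp
  | succ k ih =>
    rw [pow_succ, Equiv.Perm.mul_apply, ih]
    show ((x.1 + 1) + (k : ℤ), x.2) = _
    refine Prod.ext ?_ rfl
    push_cast
    ring

theorem shiftAut_zpow (p : ℕ → Bool) (j : ℤ) (x : ℤ × ℕ) :
    ((shiftAut p).toEquiv ^ j) x = (x.1 + j, x.2) := by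
  induction j using Int.induction_on generalizing x with
  | zero => simp
  | succ k ih =>
    rw [zpow_add_one, Equiv.Perm.mul_apply, ih]
    show ((x.1 + 1) + (k : ℤ), x.2) = _
    refine Prod.ext ?_ rfl
    push_cast
    ring
  | pred k ih =>
    rw [zpow_sub_one, Equiv.Perm.mul_apply]
    have : ((shiftAut p).toEquiv⁻¹) x = (x.1 - 1, x.2) := by
      rw [Equiv.Perm.inv_def]
      show (Equiv.prodCongr (Equiv.addRight (1 : ℤ)) (Equiv.refl ℕ)).symm x = _
      simp [Equiv.prodCongr_symm, Prod.map, sub_eq_add_neg]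
    rw [this, ih]
    refine Prod.ext ?_ rfl
    dsimp only
    ring

theorem shiftGraph_ep (p : ℕ → Bool) : ExtensionProperty (shiftGraph p) := by
  classical
  intro A B hAB
  set N : ℕ := ((A ∪ B).image Prod.snd).sup id with hN
  obtain ⟨m, hm, hmenc⟩ := enc_surj_above A N
  have hcol : ∀ x : ℤ × ℕ, x ∈ A ∪ B → x.2 < m := by
    intro x hx
    have : x.2 ≤ N := Finset.le_sup (f := id) (Finset.mem_image.mpr ⟨x, hx, rfl⟩)
    omega
  refine ⟨(0, m), ?_, ?_⟩
  · intro a ha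
    refine Or.inl (Or.inr ⟨hcol a (Finset.mem_union_left _ ha), ?_⟩)
    rw [hmenc]
    simpa using ha
  · intro b hb hadj
    have hbm : b.2 < m := hcol b (Finset.mem_union_right _ hb)
    rcases hadj with h | h
    · rcases h with ⟨h, -⟩ | ⟨-, h⟩
      · omega
      · rw [hmenc] at h
        have : b ∈ A := by simpa using h
        exact (Finset.disjoint_left.mp hAB this) hb
    · rcases h with ⟨h, -⟩ | ⟨h, -⟩
      · simp at h
        omega
      · simp at h
        omega

theorem shiftGraph_adj_pow (p : ℕ → Bool) (x : ℤ × ℕ) (n : ℕ) (hn : 1 ≤ n) :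
    (shiftGraph p).Adj x (((shiftAut p).toEquiv ^ n) x) ↔ p n = false := by
  rw [shiftAut_pow]
  have hne : x.1 ≠ x.1 + (n : ℤ) := by omega
  have h1 : (x.1 - (x.1 + (n : ℤ))).natAbs = n := by omega
  have h2 : ((x.1 + (n : ℤ)) - x.1).natAbs = n := by omega
  show shiftR p x (x.1 + (n : ℤ), x.2) ∨ shiftR p (x.1 + (n : ℤ), x.2) x ↔ _
  unfold shiftR
  dsimp only
  rw [h1, h2]
  constructor
  · rintro ((⟨-, -, h⟩ | ⟨h, -⟩) | (⟨-, -, h⟩ | ⟨h, -⟩)) <;>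
      first | exact h | exact absurd h (lt_irrefl _)
  · intro h
    exact Or.inl (Or.inl ⟨rfl, hne, h⟩)

end ShiftGraph

section Conj

theorem conj_pow_apply {α β : Type*} (e : α ≃ β) (s : Equiv.Perm α) (n : ℕ) (v : β) :
    ((((e.symm.trans s).trans e) : Equiv.Perm β) ^ n) v = e ((s ^ n) (e.symm v)) := by
  induction n generalizing v with
  | zero => simp
  | succ k ih =>
    rw [pow_succ, Equiv.Perm.mul_apply, ih, pow_succ, Equiv.Perm.mul_apply]
    simp

theorem conj_zpow_apply {α β : Type*} (e : α ≃ β) (s : Equiv.Perm α) (j : ℤ) (v : β) :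
    ((((e.symm.trans s).trans e) : Equiv.Perm β) ^ j) v = e ((s ^ j) (e.symm v)) := by
  induction j using Int.induction_on generalizing v with
  | zero => simp
  | succ k ih =>
    rw [zpow_add_one, Equiv.Perm.mul_apply, ih, zpow_add_one, Equiv.Perm.mul_apply]
    simp
  | pred k ih =>
    rw [zpow_sub_one, Equiv.Perm.mul_apply, ih, zpow_sub_one, Equiv.Perm.mul_apply]
    simp [Equiv.Perm.inv_def]

end Conj

/-- Continuum many conjugacy classes: for every `p : ℕ∖{0} → 2` there is `f_p ∈ Aut(R)`
with no finite orbits such that `v R f_p^n(v) ⟺ p n = 0` for all `v` and `n ≥ 1`; moreover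
`f_p` and `f_{p'}` are not conjugate for `p ≠ p'`. -/
theorem continuum_many_classes {V : Type*} [Countable V] [Infinite V]
    (G : SimpleGraph V) (hG : ExtensionProperty G) :
    ∃ F : (ℕ → Bool) → (G ≃g G),
      (∀ p : ℕ → Bool,
        (∀ v : V, (fOrbit (F p) v).Infinite) ∧
        (∀ v : V, ∀ n : ℕ, 1 ≤ n →
          (G.Adj v (((F p).toEquiv ^ n) v) ↔ p n = false))) ∧
      (∀ p p' : ℕ → Bool, (∃ n : ℕ, 1 ≤ n ∧ p n ≠ p' n) →
        ¬ ∃ g : G ≃g G, ∀ v : V, g (F p v) = F p' (g v)) := by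
  classical
  have hiso : ∀ p : ℕ → Bool, Nonempty (shiftGraph p ≃g G) :=
    fun p => iso_of_extension _ G (shiftGraph_ep p) hG
  set θ : ∀ p : ℕ → Bool, shiftGraph p ≃g G := fun p => (hiso p).some with hθ
  set F : (ℕ → Bool) → G ≃g G := fun p => ((θ p).symm.trans (shiftAut p)).trans (θ p) with hF
  have hFpow : ∀ (p : ℕ → Bool) (n : ℕ) (v : V),
      ((F p).toEquiv ^ n) v = (θ p) (((shiftAut p).toEquiv ^ n) ((θ p).symm v)) :=
    fun p n v => conj_pow_apply (θ p).toEquiv (shiftAut p).toEquiv n v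
  have hFzpow : ∀ (p : ℕ → Bool) (j : ℤ) (v : V),
      ((F p).toEquiv ^ j) v = (θ p) (((shiftAut p).toEquiv ^ j) ((θ p).symm v)) :=
    fun p j v => conj_zpow_apply (θ p).toEquiv (shiftAut p).toEquiv j v
  have prop2 : ∀ (p : ℕ → Bool) (v : V) (n : ℕ), 1 ≤ n →
      (G.Adj v (((F p).toEquiv ^ n) v) ↔ p n = false) := by
    intro p v n hn
    have hmap := (θ p).map_rel_iff
      (a := (θ p).symm v) (b := ((shiftAut p).toEquiv ^ n) ((θ p).symm v))
    rw [RelIso.apply_symm_apply] at hmap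
    rw [hFpow]
    exact hmap.trans (shiftGraph_adj_pow p _ n hn)
  refine ⟨F, fun p => ⟨?_, prop2 p⟩, ?_⟩
  · intro v
    have hor : fOrbit (F p) v = Set.range
        (fun j : ℤ => (θ p) ((((θ p).symm v).1 + j, ((θ p).symm v).2))) := by
      refine congrArg Set.range (funext fun j => ?_)
      rw [hFzpow p j v, shiftAut_zpow]
    rw [hor]
    apply Set.infinite_range_of_injective
    intro j j' h
    have h2 : ((((θ p).symm v).1 + j, ((θ p).symm v).2) : ℤ × ℕ)
        = (((θ p).symm v).1 + j', ((θ p).symm v).2) := (θ p).toEquiv.injective h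
    have h3 : (((θ p).symm v).1 + j) = (((θ p).symm v).1 + j') := congrArg Prod.fst h2
    omega
  · rintro p p' ⟨n, hn, hne⟩ ⟨g, hg⟩
    have hgpow : ∀ (m : ℕ) (v : V), g (((F p).toEquiv ^ m) v) = ((F p').toEquiv ^ m) (g v) := by
      intro m
      induction m with
      | zero => intro v; simp
      | succ k ih =>
        intro v
        rw [pow_succ, Equiv.Perm.mul_apply, pow_succ, Equiv.Perm.mul_apply]
        have : ((F p).toEquiv) v = F p v := rfl
        rw [this, ih (F p v), hg v]
        rfl
    obtain ⟨v⟩ : Nonempty V := inferInstance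
    have e1 := prop2 p v n hn
    have e2 := prop2 p' (g v) n hn
    have e3 : G.Adj (g v) (g (((F p).toEquiv ^ n) v)) ↔ G.Adj v (((F p).toEquiv ^ n) v) :=
      g.map_rel_iff
    rw [hgpow n v] at e3
    have : (p n = false) ↔ (p' n = false) := by
      rw [← e1, ← e3, e2]
    exact hne (by cases hp : p n <;> cases hp' : p' n <;> simp_all)
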